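/- Let u₁, u₂ be positive integers and v₁, v₂ integers with u₁v₂ − u₂v₁ ≠ 0, and let α be a real number. If there exists a complex number c such that ((u₁n + v₁)/(u₂n + v₂))^{iα} = c for all sufficiently large positive integers n, then α = 0 and c = 1. -/

import Mathlib

open Filter Topology

theorem stmt_0 (u₁ u₂ v₁ v₂ : ℤ) (hu₁ : 0 < u₁) (hu₂ : 0 < u₂)
    (hΔ : u₁ * v₂ - u₂ * v₁ ≠ 0) (α : ℝ) (c : ℂ)
    (h : ∃ N : ℤ, ∀ n : ℤ, N ≤ n →
      0 < u₁ * n + v₁ ∧ 0 < u₂ * n + v₂ ∧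
      Complex.exp (Complex.I * α *
        Real.log (((u₁ * n + v₁ : ℤ) : ℝ) / ((u₂ * n + v₂ : ℤ) : ℝ))) = c) :
    α = 0 ∧ c = 1 := by
  obtain ⟨N, hN⟩ := h
  set r : ℤ → ℝ := fun n => ((u₁ * n + v₁ : ℤ) : ℝ) / ((u₂ * n + v₂ : ℤ) : ℝ) with hr
  set f : ℤ → ℝ := fun n => Real.log (r n) with hfdef
  have hrpos : ∀ n, N ≤ n → 0 < r n := by
    intro n hn
    have h1 := (hN n hn).1
    have h2 := (hN n hn).2.1
    exact div_pos (by exact_mod_cast h1) (by exact_mod_cast h2)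
  -- r is injective for consecutive n
  have hrne : ∀ n, N ≤ n → r n ≠ r (n + 1) := by
    intro n hn heq
    have h2 := (hN n hn).2.1
    have h2' := (hN (n+1) (by omega)).2.1
    have hb : ((u₂ * n + v₂ : ℤ) : ℝ) ≠ 0 := by exact_mod_cast h2.ne'
    have hb' : ((u₂ * (n+1) + v₂ : ℤ) : ℝ) ≠ 0 := by exact_mod_cast h2'.ne'
    rw [hr] at heq
    simp only [div_eq_div_iff hb hb'] at heq
    have : (u₁ * n + v₁) * (u₂ * (n+1) + v₂) = (u₁ * (n+1) + v₁) * (u₂ * n + v₂) := by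
      exact_mod_cast heq
    have : u₂ * v₁ - u₁ * v₂ = 0 := by nlinarith [this]
    omega
  have hfne : ∀ n, N ≤ n → f n ≠ f (n + 1) := by
    intro n hn heq
    exact hrne n hn (Real.log_injOn_pos (Set.mem_Ioi.2 (hrpos n hn))
      (Set.mem_Ioi.2 (hrpos (n+1) (by omega))) heq)
  have hα : α = 0 := by
    by_contra hα
    -- key: |f n - f (n+1)| ≥ 2π/|α| for n ≥ N
    have hkey : ∀ n, N ≤ n → 2 * Real.pi / |α| ≤ |f n - f (n + 1)| := by
      intro n hn
      have e1 := (hN n hn).2.2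
      have e2 := (hN (n+1) (by omega)).2.2
      have : Complex.exp (Complex.I * α * f n) = Complex.exp (Complex.I * α * f (n+1)) := by
        rw [e1, e2]
      rw [Complex.exp_eq_exp_iff_exists_int] at this
      obtain ⟨k, hk⟩ := this
      have hk' : α * (f n - f (n+1)) = k * (2 * Real.pi) := by
        have : (Complex.I : ℂ) * ((α * (f n - f (n+1)) : ℝ) - (k * (2 * Real.pi) : ℝ)) = 0 := by
          push_cast
          rw [mul_sub]
          linear_combination hk
        rcases mul_eq_zero.1 this with h' | h'
        · exact absurd h' Complex.I_ne_zero
        · have := sub_eq_zero.1 (by exact_mod_cast h')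
          exact_mod_cast this
      have hd0 : f n - f (n+1) ≠ 0 := sub_ne_zero.2 (hfne n hn)
      have hk0 : (k : ℝ) ≠ 0 := by
        intro h0
        rw [h0, zero_mul] at hk'
        exact (mul_ne_zero hα hd0) hk'
      have h1 : (1:ℝ) ≤ |(k:ℝ)| := by
        have : k ≠ 0 := by exact_mod_cast hk0
        exact_mod_cast Int.one_le_abs (by omega)
      have habs : |α| * |f n - f (n+1)| = |(k:ℝ)| * (2 * Real.pi) := by
        rw [← abs_mul, hk', abs_mul, abs_of_pos (by positivity : (0:ℝ) < 2 * Real.pi)]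
      have : 2 * Real.pi ≤ |α| * |f n - f (n+1)| := by
        rw [habs]; nlinarith [Real.pi_pos]
      rw [div_le_iff₀ (abs_pos.2 hα)]
      linarith [this]
    -- but f n - f(n+1) → 0
    have hL : Tendsto (fun x : ℝ => (u₁ * x + v₁) / (u₂ * x + v₂)) atTop
        (𝓝 ((u₁ : ℝ) / u₂)) := by
      have : ∀ᶠ x : ℝ in atTop, (u₁ * x + v₁) / (u₂ * x + v₂)
          = ((u₁ : ℝ) + v₁ / x) / ((u₂ : ℝ) + v₂ / x) := by
        filter_upwards [eventually_gt_atTop (0:ℝ)] with x hx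
        have hx0 : x ≠ 0 := hx.ne'
        rw [show ((u₁:ℝ) + v₁ / x) = ((u₁:ℝ) * x + v₁)/x by field_simp,
          show ((u₂:ℝ) + v₂ / x) = ((u₂:ℝ) * x + v₂)/x by field_simp,
          div_div_div_cancel_right₀]
        exact hx0
      rw [tendsto_congr' this]
      have hnum : Tendsto (fun x : ℝ => (u₁ : ℝ) + v₁ / x) atTop (𝓝 ((u₁:ℝ) + 0)) :=
        tendsto_const_nhds.add (tendsto_const_nhds.div_atTop tendsto_id)
      have hden : Tendsto (fun x : ℝ => (u₂ : ℝ) + v₂ / x) atTop (𝓝 ((u₂:ℝ) + 0)) :=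
        tendsto_const_nhds.add (tendsto_const_nhds.div_atTop tendsto_id)
      have hu₂' : ((u₂:ℝ) + 0) ≠ 0 := by
        have : (0:ℝ) < u₂ := by exact_mod_cast hu₂
        simpa using this.ne'
      have h3 := hnum.div hden hu₂'
      simp only [add_zero] at h3
      exact h3
    have hrL : Tendsto r atTop (𝓝 ((u₁ : ℝ) / u₂)) := by
      have : Tendsto (fun n : ℤ => (n : ℝ)) atTop atTop := tendsto_intCast_atTop_atTop
      have := hL.comp this
      refine this.congr ?_
      intro n
      simp [hr]
    have hfL : Tendsto f atTop (𝓝 (Real.log ((u₁:ℝ)/u₂))) := by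
      have hcont : ContinuousAt Real.log ((u₁:ℝ)/u₂) := by
        apply Real.continuousAt_log
        have h1 : (0:ℝ) < u₁ := by exact_mod_cast hu₁
        have h2 : (0:ℝ) < u₂ := by exact_mod_cast hu₂
        positivity
      exact hcont.tendsto.comp hrL
    have hfL' : Tendsto (fun n => f (n+1)) atTop (𝓝 (Real.log ((u₁:ℝ)/u₂))) :=
      hfL.comp (tendsto_atTop_add_const_right _ 1 tendsto_id)
    have hdiff : Tendsto (fun n => f n - f (n+1)) atTop (𝓝 0) := by
      simpa using hfL.sub hfL'
    have hε : (0:ℝ) < 2 * Real.pi / |α| := by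
      have := Real.pi_pos
      positivity
    have := (hdiff.eventually (eventually_abs_sub_lt 0 hε))
    rw [eventually_atTop] at this
    obtain ⟨M, hM⟩ := this
    have hn := hM (max M N) (le_max_left _ _)
    have := hkey (max M N) (le_max_right _ _)
    simp only [sub_zero] at hn
    linarith
  refine ⟨hα, ?_⟩
  have := (hN N le_rfl).2.2
  rw [hα] at this
  simpa using this.symm
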